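/- arXiv:1703.05696 — 4 statements merged into one kernel-verified Lean document; each statement's English description precedes it below -/
import Mathlib

section
/- (Rodrigues formula) For every θ ∈ ℝ and every unit vector u ∈ ℝ³, the matrix exponential of θ[u]× satisfies exp(θ[u]×) = I + sin(θ)[u]× + (1 − cos(θ))[u]×², and this matrix belongs to SO(3). -/
open Matrix

/-- `R ∈ SO(3)`: `R Rᵀ = I` and `det R = 1`. -/
def IsSO3 (R : Matrix (Fin 3) (Fin 3) ℝ) : Prop := R * Rᵀ = 1 ∧ R.det = 1

/-- The skew-symmetric matrix `[x]×` with `[x]× y = x × y`. -/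
def skew (x : Fin 3 → ℝ) : Matrix (Fin 3) (Fin 3) ℝ :=
  !![0, -x 2, x 1; x 2, 0, -x 0; -x 1, x 0, 0]

attribute [local instance] Matrix.linftyOpNormedRing Matrix.linftyOpNormedAlgebra

lemma skew_transpose (u : Fin 3 → ℝ) : (skew u)ᵀ = -skew u := by
  ext i j
  fin_cases i <;> fin_cases j <;> simp [skew]

lemma skew_cube (u : Fin 3 → ℝ) (hu : u ⬝ᵥ u = 1) :
    skew u * (skew u * skew u) = -skew u := by
  have h : u 0 ^ 2 + u 1 ^ 2 + u 2 ^ 2 = 1 := by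
    simpa [dotProduct, Fin.sum_univ_three, sq] using hu
  ext i j
  fin_cases i <;> fin_cases j <;>
    simp [skew, Matrix.mul_apply, Fin.sum_univ_three] <;>
    first
      | ring1
      | linear_combination (u 0) * h
      | linear_combination (-(u 0)) * h
      | linear_combination (u 1) * h
      | linear_combination (-(u 1)) * h
      | linear_combination (u 2) * h
      | linear_combination (-(u 2)) * h

/-- Rodrigues formula: `exp(θ[u]×) = I + sin θ [u]× + (1 - cos θ)[u]×²`, and this
matrix belongs to SO(3). -/
theorem stmt1 (θ : ℝ) (u : Fin 3 → ℝ) (hu : u ⬝ᵥ u = 1) :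
    NormedSpace.exp (θ • skew u) =
      1 + Real.sin θ • skew u + (1 - Real.cos θ) • (skew u * skew u) ∧
    IsSO3 (NormedSpace.exp (θ • skew u)) := by
  set K := skew u with hK
  -- the Rodrigues matrix
  set R : ℝ → Matrix (Fin 3) (Fin 3) ℝ :=
    fun t => 1 + Real.sin t • K + (1 - Real.cos t) • (K * K) with hRdef
  have hKR : ∀ t, K * R t = Real.cos t • K + Real.sin t • (K * K) := by
    intro t
    have h3 := skew_cube u hu
    simp only [hRdef, mul_add, mul_one, mul_smul_comm, ← mul_assoc]
    rw [mul_assoc, h3]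
    have hsc : Real.sin t ^ 2 + Real.cos t ^ 2 = 1 := Real.sin_sq_add_cos_sq t
    module
  have hR' : ∀ t, HasDerivAt R (Real.cos t • K + Real.sin t • (K * K)) t := by
    intro t
    have h1 : HasDerivAt (fun t : ℝ => Real.sin t • K) (Real.cos t • K) t :=
      (Real.hasDerivAt_sin t).smul_const K
    have h2 : HasDerivAt (fun t : ℝ => (1 - Real.cos t) • (K * K))
        (Real.sin t • (K * K)) t := by
      have := ((hasDerivAt_const t (1 : ℝ)).sub (Real.hasDerivAt_cos t)).smul_const (K * K)
      simp at this; exact this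
    have := ((hasDerivAt_const t (1 : Matrix (Fin 3) (Fin 3) ℝ)).add h1).add h2
    simp at this; exact this
  -- the auxiliary function exp(-tK) * R t is constant
  set g : ℝ → Matrix (Fin 3) (Fin 3) ℝ :=
    fun t => NormedSpace.exp (t • (-K)) * R t with hgdef
  have hg : ∀ t, HasDerivAt g 0 t := by
    intro t
    have hE : HasDerivAt (fun t : ℝ => NormedSpace.exp (t • (-K)))
        (NormedSpace.exp (t • (-K)) * (-K)) t := hasDerivAt_exp_smul_const (-K) t
    have := hE.mul (hR' t)
    refine this.congr_deriv ?_
    rw [← hKR t]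
    noncomm_ring
  have hgconst : ∀ t, g t = g 0 := by
    intro t
    apply is_const_of_fderiv_eq_zero (fun x => (hg x).differentiableAt)
    intro x
    refine (hg x).hasFDerivAt.fderiv.trans ?_
    ext y
    simp; rfl
  have hg0 : g 0 = 1 := by
    simp [hgdef, hRdef, NormedSpace.exp_zero]
  have hinv : NormedSpace.exp (θ • K) * NormedSpace.exp (θ • (-K)) = 1 := by
    have hc : Commute (θ • K) (θ • (-K)) := by
      simp [Commute, SemiconjBy, smul_neg, neg_mul, mul_neg]
    have := (Matrix.exp_add_of_commute _ _ hc).symm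
    rw [smul_neg, add_neg_cancel, NormedSpace.exp_zero] at this
    simpa [smul_neg] using this
  have hmain : NormedSpace.exp (θ • K) = R θ := by
    have h1 : g θ = 1 := (hgconst θ).trans hg0
    calc NormedSpace.exp (θ • K) = NormedSpace.exp (θ • K) * (g θ) := by
          rw [h1, mul_one]
      _ = (NormedSpace.exp (θ • K) * NormedSpace.exp (θ • (-K))) * R θ := by
          rw [hgdef]; ring_nf; rw [mul_assoc]
      _ = R θ := by rw [hinv, one_mul]
  refine ⟨hmain, ?_, ?_⟩
  · -- orthogonality
    have ht : (θ • K)ᵀ = θ • (-K) := by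
      rw [transpose_smul, hK, skew_transpose]
    rw [← Matrix.exp_transpose, ht, hinv]
  · -- determinant
    rw [hmain]
    have h : u 0 ^ 2 + u 1 ^ 2 + u 2 ^ 2 = 1 := by
      simpa [dotProduct, Fin.sum_univ_three, sq] using hu
    have hsc : Real.sin θ ^ 2 + Real.cos θ ^ 2 = 1 := Real.sin_sq_add_cos_sq θ
    simp [hRdef, hK, skew, det_fin_three, Matrix.add_apply, Matrix.smul_apply,
      Matrix.one_apply, Matrix.mul_apply, Fin.sum_univ_three]
    ring_nf
    linear_combination ((u 0 ^ 2 + u 1 ^ 2 + u 2 ^ 2) * (1 - Real.cos θ) ^ 2) * h +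
      (u 0 ^ 2 + u 1 ^ 2 + u 2 ^ 2) * hsc
end

section
/- For every R ∈ SO(3) and every ω ∈ ℝ³, ψ(R[ω]×) = (1/2)(tr(R)·I − Rᵀ)ω; i.e. the directional variation of ψ along the attitude flow Ṙ = R[ω]× is given by E(R)ᵀω with E(R) = (1/2)(tr(R)·I − R). -/
open Matrix

/-- `ψ(A) = vex(P_a(A))` where `P_a(A) = (A - Aᵀ)/2`. -/
noncomputable def psi (A : Matrix (Fin 3) (Fin 3) ℝ) : Fin 3 → ℝ :=
  ![(A 2 1 - A 1 2)/2, (A 0 2 - A 2 0)/2, (A 1 0 - A 0 1)/2]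

/-- `E(R) = (1/2)(tr(R)·I - R)`. -/
noncomputable def eMat (R : Matrix (Fin 3) (Fin 3) ℝ) : Matrix (Fin 3) (Fin 3) ℝ :=
  (1/2 : ℝ) • (Matrix.trace R • (1 : Matrix (Fin 3) (Fin 3) ℝ) - R)

lemma key (R : Matrix (Fin 3) (Fin 3) ℝ) (ω : Fin 3 → ℝ) :
    psi (R * skew ω) =
      ((1/2 : ℝ) • (Matrix.trace R • (1 : Matrix (Fin 3) (Fin 3) ℝ) - Rᵀ)).mulVec ω := by
  funext i
  fin_cases i <;>
    simp [psi, skew, mulVec, dotProduct, Matrix.mul_apply, Matrix.trace,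
      Fin.sum_univ_three, Matrix.one_apply, Matrix.diag] <;> ring

/-- `ψ(R[ω]×) = (1/2)(tr(R)·I - Rᵀ)ω = E(R)ᵀ ω` for `R ∈ SO(3)`. -/
theorem stmt8 (R : Matrix (Fin 3) (Fin 3) ℝ) (hR : IsSO3 R) (ω : Fin 3 → ℝ) :
    psi (R * skew ω) =
      ((1/2 : ℝ) • (Matrix.trace R • (1 : Matrix (Fin 3) (Fin 3) ℝ) - Rᵀ)).mulVec ω ∧
    psi (R * skew ω) = (eMat R)ᵀ.mulVec ω := by
  have h : (eMat R)ᵀ =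
      (1/2 : ℝ) • (Matrix.trace R • (1 : Matrix (Fin 3) (Fin 3) ℝ) - Rᵀ) := by
    simp [eMat, Matrix.transpose_smul, Matrix.transpose_sub]
  exact ⟨key R ω, by rw [h]; exact key R ω⟩
end

section
/- Let R, R̂ ∈ SO(3) and r_m, r_a ∈ ℝ³ with r_m ≠ 0 and r_m × r_a ≠ 0, and set b_m = Rᵀr_m, b_a = Rᵀr_a. Then Φ₀(R̂, b_m, b_a, r_a) := 3 − r_mᵀ R̂ b_m/‖b_m‖² − (r_m × r_a)ᵀ R̂ (b_m × b_a)/‖b_m × b_a‖² − (r_m × (r_m × r_a))ᵀ R̂ (b_m × (b_m × b_a))/‖b_m × (b_m × b_a)‖² equals tr(I − RR̂ᵀ) = 4|RR̂ᵀ|_I². -/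
open Matrix

/-- Squared normalized Euclidean distance on SO(3): `|R|_I² = (1/4) tr(I - R)`. -/
noncomputable def distI2 (R : Matrix (Fin 3) (Fin 3) ℝ) : ℝ :=
  (1/4) * Matrix.trace (1 - R)

/-- The measurable cost
`Φ₀(R̂, b_m, b_a, r) = 3 - r_mᵀR̂b_m/‖b_m‖² - (r_m×r)ᵀR̂(b_m×b_a)/‖b_m×b_a‖²
  - (r_m×(r_m×r))ᵀR̂(b_m×(b_m×b_a))/‖b_m×(b_m×b_a)‖²` (with `r_m` the inertial
magnetic field vector). -/
noncomputable def Phi0 (Rh : Matrix (Fin 3) (Fin 3) ℝ) (rm bm ba r : Fin 3 → ℝ) : ℝ :=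
  3 - (rm ⬝ᵥ Rh.mulVec bm) / (bm ⬝ᵥ bm)
    - ((rm ⨯₃ r) ⬝ᵥ Rh.mulVec (bm ⨯₃ ba)) / ((bm ⨯₃ ba) ⬝ᵥ (bm ⨯₃ ba))
    - ((rm ⨯₃ (rm ⨯₃ r)) ⬝ᵥ Rh.mulVec (bm ⨯₃ (bm ⨯₃ ba))) /
        ((bm ⨯₃ (bm ⨯₃ ba)) ⬝ᵥ (bm ⨯₃ (bm ⨯₃ ba)))

lemma key' (M : Matrix (Fin 3) (Fin 3) ℝ) (u w : Fin 3 → ℝ) :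
    (u ⬝ᵥ M.mulVec u) * ((u ⨯₃ w) ⬝ᵥ (u ⨯₃ w))
      + ((u ⨯₃ w) ⬝ᵥ M.mulVec (u ⨯₃ w)) * (u ⬝ᵥ u)
      + ((u ⨯₃ (u ⨯₃ w)) ⬝ᵥ M.mulVec (u ⨯₃ (u ⨯₃ w)))
    = Matrix.trace M * (u ⬝ᵥ u) * ((u ⨯₃ w) ⬝ᵥ (u ⨯₃ w)) := by
  simp [cross_apply, dotProduct, mulVec, Matrix.trace, Fin.sum_univ_three, Matrix.diag]
  ring

lemma cross_mulVec' (A : Matrix (Fin 3) (Fin 3) ℝ) (u v : Fin 3 → ℝ) :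
    (A.mulVec u) ⨯₃ (A.mulVec v) = (A.adjugate)ᵀ.mulVec (u ⨯₃ v) := by
  funext i
  fin_cases i <;>
    simp [cross_apply, mulVec, dotProduct, Fin.sum_univ_three, adjugate_fin_three] <;> ring

lemma adj_so3' (R : Matrix (Fin 3) (Fin 3) ℝ) (h1 : R * Rᵀ = 1) (h2 : R.det = 1) :
    R.adjugate = Rᵀ := by
  have := Matrix.mul_adjugate R
  rw [h2, one_smul] at this
  calc R.adjugate = (Rᵀ * R) * R.adjugate := by rw [mul_eq_one_comm.mp h1, one_mul]
    _ = Rᵀ * (R * R.adjugate) := by rw [Matrix.mul_assoc]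
    _ = Rᵀ := by rw [this, Matrix.mul_one]

lemma norm_cross_self (u w : Fin 3 → ℝ) :
    (u ⨯₃ (u ⨯₃ w)) ⬝ᵥ (u ⨯₃ (u ⨯₃ w)) = (u ⬝ᵥ u) * ((u ⨯₃ w) ⬝ᵥ (u ⨯₃ w)) := by
  simp [cross_apply, dotProduct, Fin.sum_univ_three]
  ring

/-- With `b_m = Rᵀr_m`, `b_a = Rᵀr_a`, `r_m ≠ 0`, `r_m × r_a ≠ 0`:
`Φ₀(R̂, b_m, b_a, r_a) = tr(I - RR̂ᵀ) = 4|RR̂ᵀ|_I²`. -/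
theorem stmt12 (R Rh : Matrix (Fin 3) (Fin 3) ℝ) (hR : IsSO3 R) (hRh : IsSO3 Rh)
    (rm ra : Fin 3 → ℝ) (hrm : rm ≠ 0) (hcross : rm ⨯₃ ra ≠ 0) :
    Phi0 Rh rm (Rᵀ.mulVec rm) (Rᵀ.mulVec ra) ra = Matrix.trace (1 - R * Rhᵀ) ∧
    Phi0 Rh rm (Rᵀ.mulVec rm) (Rᵀ.mulVec ra) ra = 4 * distI2 (R * Rhᵀ) := by
  obtain ⟨h1, h2⟩ := hR
  have h1' : Rᵀ * R = 1 := mul_eq_one_comm.mp h1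
  -- cross product equivariance for Rᵀ
  have hadj : (Rᵀ).adjugate = R := by
    have := adj_so3' Rᵀ (by rw [transpose_transpose]; exact h1') (by rw [det_transpose]; exact h2)
    rw [transpose_transpose] at this; exact this
  have hcr : ∀ u v : Fin 3 → ℝ,
      (Rᵀ.mulVec u) ⨯₃ (Rᵀ.mulVec v) = Rᵀ.mulVec (u ⨯₃ v) := by
    intro u v
    rw [cross_mulVec', hadj]
  -- dot product preservation
  have hdot : ∀ x y : Fin 3 → ℝ, (Rᵀ.mulVec x) ⬝ᵥ (Rᵀ.mulVec y) = x ⬝ᵥ y := by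
    intro x y
    rw [Matrix.mulVec_transpose, ← Matrix.dotProduct_mulVec, Matrix.mulVec_mulVec, h1,
      Matrix.one_mulVec]
  -- numerators
  have hnum : ∀ x : Fin 3 → ℝ, x ⬝ᵥ Rh.mulVec (Rᵀ.mulVec x) = x ⬝ᵥ (Rh * Rᵀ).mulVec x := by
    intro x; rw [Matrix.mulVec_mulVec]
  have hu0 : rm ⬝ᵥ rm ≠ 0 := fun h => hrm (by simpa using (dotProduct_self_eq_zero).mp h)
  have hb0 : (rm ⨯₃ ra) ⬝ᵥ (rm ⨯₃ ra) ≠ 0 :=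
    fun h => hcross (by simpa using (dotProduct_self_eq_zero).mp h)
  have htr : Matrix.trace (1 - R * Rhᵀ) = 3 - Matrix.trace (Rh * Rᵀ) := by
    rw [Matrix.trace_sub, Matrix.trace_one]
    have : Matrix.trace (R * Rhᵀ) = Matrix.trace (Rh * Rᵀ) := by
      rw [← Matrix.trace_transpose (R * Rhᵀ), Matrix.transpose_mul, Matrix.transpose_transpose]
    rw [this]
    norm_num
  have hphi : Phi0 Rh rm (Rᵀ.mulVec rm) (Rᵀ.mulVec ra) ra = 3 - Matrix.trace (Rh * Rᵀ) := by
    rw [Phi0, hcr, hcr, hnum, hnum, hnum, hdot, hdot, hdot, norm_cross_self]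
    have hk := key' (Rh * Rᵀ) rm ra
    set T1 := rm ⬝ᵥ (Rh * Rᵀ).mulVec rm
    set T2 := (rm ⨯₃ ra) ⬝ᵥ (Rh * Rᵀ).mulVec (rm ⨯₃ ra)
    set T3 := (rm ⨯₃ (rm ⨯₃ ra)) ⬝ᵥ (Rh * Rᵀ).mulVec (rm ⨯₃ (rm ⨯₃ ra))
    set A := rm ⬝ᵥ rm
    set B := (rm ⨯₃ ra) ⬝ᵥ (rm ⨯₃ ra)
    set t := Matrix.trace (Rh * Rᵀ)
    field_simp
    linear_combination -hk
  refine ⟨by rw [hphi, htr], ?_⟩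
  rw [hphi, distI2, htr]
  ring
end

section
/- Let R ∈ SO(3) and let {u₁, u₂, u₃} be an orthonormal basis of ℝ³. Then min_{i ∈ {1,2,3}} |R·R_a(π, uᵢ)|_I² ≤ 1 − (1/3)|R|_I². In particular, if |R|_I² ≥ q for some q ∈ [0,1], then after right-multiplying R by the minimizing rotation R_a(π, u), the squared attitude distance decreases by at least (4/3)q − 1. -/
open Matrix

lemma expand_aux (R : Matrix (Fin 3) (Fin 3) ℝ) (v : Fin 3 → ℝ) :
    distI2 (R * (-1 + (2:ℝ) • Matrix.vecMulVec v v)) =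
      (1/4) * (3 + Matrix.trace R - 2 * Matrix.trace (R * Matrix.vecMulVec v v)) := by
  unfold distI2
  have : R * (-1 + (2:ℝ) • Matrix.vecMulVec v v) = -R + (2:ℝ) • (R * Matrix.vecMulVec v v) := by
    rw [Matrix.mul_add, Matrix.mul_smul]; simp
  rw [this]
  simp [Matrix.trace_sub, Matrix.trace_add, Matrix.trace_smul, Matrix.trace_neg, Matrix.trace_one]
  ring

/-- For `R ∈ SO(3)` and an orthonormal basis `{u₁,u₂,u₃}` of `ℝ³`:
`minᵢ |R·R_a(π,uᵢ)|_I² ≤ 1 - (1/3)|R|_I²` (with `R_a(π,u) = -I + 2uuᵀ`); in particular,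
if `|R|_I² ≥ q` with `q ∈ [0,1]`, then the jump decreases the squared attitude
distance by at least `(4/3)q - 1`. -/
theorem stmt14 (R : Matrix (Fin 3) (Fin 3) ℝ) (hR : IsSO3 R) (u : Fin 3 → Fin 3 → ℝ)
    (hu : ∀ i j, u i ⬝ᵥ u j = if i = j then 1 else 0) :
    (min (distI2 (R * (-1 + (2:ℝ) • Matrix.vecMulVec (u 0) (u 0))))
      (min (distI2 (R * (-1 + (2:ℝ) • Matrix.vecMulVec (u 1) (u 1))))
        (distI2 (R * (-1 + (2:ℝ) • Matrix.vecMulVec (u 2) (u 2))))) ≤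
      1 - (1/3) * distI2 R) ∧
    (∀ q : ℝ, 0 ≤ q → q ≤ 1 → q ≤ distI2 R →
      (4/3) * q - 1 ≤ distI2 R -
        min (distI2 (R * (-1 + (2:ℝ) • Matrix.vecMulVec (u 0) (u 0))))
          (min (distI2 (R * (-1 + (2:ℝ) • Matrix.vecMulVec (u 1) (u 1))))
            (distI2 (R * (-1 + (2:ℝ) • Matrix.vecMulVec (u 2) (u 2)))))) := by
  -- Orthonormality of rows gives orthonormality of columns
  have hU : (Matrix.of u) * (Matrix.of u)ᵀ = 1 := by
    ext i j
    simpa [Matrix.mul_apply, Matrix.one_apply, dotProduct] using hu i j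
  have hU' : (Matrix.of u)ᵀ * (Matrix.of u) = 1 := mul_eq_one_comm.mp hU
  have hcol : ∀ j k : Fin 3, (∑ i : Fin 3, u i j * u i k) = if j = k then (1:ℝ) else 0 := by
    intro j k
    have := congrFun (congrFun hU' j) k
    simpa [Matrix.mul_apply, Matrix.one_apply, Matrix.transpose_apply] using this
  have key : (∑ i : Fin 3, Matrix.trace (R * Matrix.vecMulVec (u i) (u i))) = Matrix.trace R := by
    simp only [Matrix.trace, Matrix.diag, Matrix.mul_apply, Matrix.vecMulVec_apply]
    rw [Finset.sum_comm]
    refine Finset.sum_congr rfl fun j _ => ?_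
    rw [Finset.sum_comm]
    have : ∀ k : Fin 3, (∑ i : Fin 3, R j k * (u i k * u i j)) =
        R j k * (if k = j then (1:ℝ) else 0) := by
      intro k
      rw [← hcol k j, Finset.mul_sum]
    simp [this]
  have hd : distI2 R = (1/4) * (3 - Matrix.trace R) := by
    unfold distI2
    simp [Matrix.trace_sub, Matrix.trace_one]
  have e0 := expand_aux R (u 0)
  have e1 := expand_aux R (u 1)
  have e2 := expand_aux R (u 2)
  have hsum3 : distI2 (R * (-1 + (2:ℝ) • Matrix.vecMulVec (u 0) (u 0))) +
      distI2 (R * (-1 + (2:ℝ) • Matrix.vecMulVec (u 1) (u 1))) +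
      distI2 (R * (-1 + (2:ℝ) • Matrix.vecMulVec (u 2) (u 2))) = 3 - distI2 R := by
    rw [e0, e1, e2, hd]
    have := key
    rw [Fin.sum_univ_three] at this
    linarith
  set A0 := distI2 (R * (-1 + (2:ℝ) • Matrix.vecMulVec (u 0) (u 0)))
  set A1 := distI2 (R * (-1 + (2:ℝ) • Matrix.vecMulVec (u 1) (u 1)))
  set A2 := distI2 (R * (-1 + (2:ℝ) • Matrix.vecMulVec (u 2) (u 2)))
  have hm0 : min A0 (min A1 A2) ≤ A0 := min_le_left _ _
  have hm1 : min A0 (min A1 A2) ≤ A1 := le_trans (min_le_right _ _) (min_le_left _ _)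
  have hm2 : min A0 (min A1 A2) ≤ A2 := le_trans (min_le_right _ _) (min_le_right _ _)
  constructor
  · linarith
  · intro q _ _ hq
    linarith
end
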